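/- Let D ∈ ℚ[c_{ia}] be nonzero, homogeneous of degree 4mn, and ω-isobaric of degree 2m²n. Suppose that under the corner specialization c̃ (keeping only coefficients indexed by (0,0),(m,0),(0,n),(m,n)), D(c̃) = ±Δ^{mn} where Δ is the irreducible 4×4 corner determinant, which is homogeneous of degree 4 and isobaric of degree 2m. If D = P·Q in ℚ[c_{ia}], then there exists an integer k with 0 ≤ k ≤ mn such that P is homogeneous of degree 4k and isobaric of degree 2mk, and Q is homogeneous of degree 4(mn−k) and isobaric of degree 2m(mn−k). -/

import Mathlib

open MvPolynomial

/-- Variables `c_{ia}` for `i = 1,…,4` and `a ∈ 𝒜 = {0,…,m} × {0,…,n}`. -/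
abbrev MVar (m n : ℕ) : Type := Fin 4 × Fin (m + 1) × Fin (n + 1)

/-- The determinant `Δ` of the 4×4 matrix whose `i`-th row is
`(c_{i,(0,0)}, c_{i,(m,0)}, c_{i,(0,n)}, c_{i,(m,n)})`. -/
noncomputable def cornerDet (m n : ℕ) : MvPolynomial (MVar m n) ℚ :=
  Matrix.det (Matrix.of fun (i j : Fin 4) =>
    X (i, ![((0 : Fin (m + 1)), (0 : Fin (n + 1))), (Fin.last m, 0), (0, Fin.last n),
            (Fin.last m, Fin.last n)] j))

/-- The corner specialization `c̃`: it keeps the variables `c_{ia}` with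
`a ∈ {(0,0),(m,0),(0,n),(m,n)}` and sends all the other variables to `0`. -/
noncomputable def cornerSpec (m n : ℕ) :
    MvPolynomial (MVar m n) ℚ →ₐ[ℚ] MvPolynomial (MVar m n) ℚ :=
  aeval (fun v => if (v.2.1 = 0 ∨ v.2.1 = Fin.last m) ∧ (v.2.2 = 0 ∨ v.2.2 = Fin.last n)
    then X v else 0)

namespace Aux

variable {σ : Type*} {R : Type*} [CommRing R] [IsDomain R]

/-- The algebra map sending `X v` to `C (X v) * t ^ (w v)`. -/
noncomputable def toPoly (w : σ → ℕ) : MvPolynomial σ R →ₐ[R] Polynomial (MvPolynomial σ R) :=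
  aeval (fun v => Polynomial.C (X v) * Polynomial.X ^ (w v))

theorem toPoly_monomial (w : σ → ℕ) (d : σ →₀ ℕ) (c : R) :
    toPoly w (monomial d c) =
      Polynomial.C (monomial d c) * Polynomial.X ^ (Finsupp.weight w d) := by
  classical
  rw [toPoly, aeval_monomial]
  have h2 : ∀ a ∈ d.support, (Polynomial.C (X a : MvPolynomial σ R) * Polynomial.X ^ w a) ^ d a
      = Polynomial.C ((X a : MvPolynomial σ R) ^ d a) * Polynomial.X ^ (d a • w a) := by
    intro a _
    rw [mul_pow, ← Polynomial.C_pow, ← pow_mul, smul_eq_mul, mul_comm (d a) (w a)]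
  rw [Finsupp.weight_apply, Finsupp.prod, Finsupp.sum,
    Finset.prod_congr rfl h2, Finset.prod_mul_distrib, ← map_prod,
    Finset.prod_pow_eq_pow_sum, monomial_eq, map_mul, ← mul_assoc, Finsupp.prod]
  simp [Polynomial.algebraMap_apply, MvPolynomial.algebraMap_eq]

theorem toPoly_coeff (w : σ → ℕ) (f : MvPolynomial σ R) (k : ℕ) :
    (toPoly w f).coeff k = weightedHomogeneousComponent w k f := by
  classical
  conv_lhs => rw [← support_sum_monomial_coeff f]
  rw [map_sum, Polynomial.finset_sum_coeff, weightedHomogeneousComponent_apply,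
    Finset.sum_filter]
  refine Finset.sum_congr rfl fun d _ => ?_
  rw [toPoly_monomial, Polynomial.coeff_C_mul, Polynomial.coeff_X_pow]
  simp [eq_comm, mul_ite]

theorem toPoly_retract (w : σ → ℕ) (f : MvPolynomial σ R) :
    Polynomial.eval 1 (toPoly w f) = f := by
  have : (Polynomial.evalRingHom (1 : MvPolynomial σ R)).comp (toPoly w).toRingHom
      = RingHom.id _ := by
    apply MvPolynomial.ringHom_ext
    · intro r; simp [toPoly]
    · intro v; simp [toPoly]
  exact congrArg (fun g => g f) (congrArg DFunLike.coe this)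

theorem toPoly_ne_zero (w : σ → ℕ) {f : MvPolynomial σ R} (hf : f ≠ 0) :
    toPoly w f ≠ 0 := fun h => hf (by rw [← toPoly_retract w f, h, Polynomial.eval_zero])

theorem toPoly_of_isWeightedHomogeneous (w : σ → ℕ) {f : MvPolynomial σ R} {N : ℕ}
    (hf : IsWeightedHomogeneous w f N) :
    toPoly w f = Polynomial.C f * Polynomial.X ^ N := by
  classical
  conv_lhs => rw [← support_sum_monomial_coeff f]
  conv_rhs => rw [← support_sum_monomial_coeff f]
  rw [map_sum, map_sum, Finset.sum_mul]
  refine Finset.sum_congr rfl fun d hd => ?_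
  rw [toPoly_monomial, hf (mem_support_iff.mp hd)]

/-- Factors of a weighted homogeneous polynomial over a domain are weighted homogeneous. -/
theorem isWeightedHomogeneous_of_mul (w : σ → ℕ) {f g : MvPolynomial σ R} {N : ℕ}
    (hf : f ≠ 0) (hg : g ≠ 0) (h : IsWeightedHomogeneous w (f * g) N) :
    ∃ a b : ℕ, a + b = N ∧ IsWeightedHomogeneous w f a ∧ IsWeightedHomogeneous w g b := by
  classical
  have hfg : f * g ≠ 0 := mul_ne_zero hf hg
  have hF : toPoly w f ≠ 0 := toPoly_ne_zero w hf
  have hG : toPoly w g ≠ 0 := toPoly_ne_zero w hg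
  have hprod : toPoly w f * toPoly w g = Polynomial.C (f * g) * Polynomial.X ^ N := by
    rw [← map_mul, toPoly_of_isWeightedHomogeneous w h]
  have hCfg : Polynomial.C (f * g) ≠ 0 := by simpa using hfg
  have hdeg : (toPoly w f).natDegree + (toPoly w g).natDegree = N := by
    rw [← Polynomial.natDegree_mul hF hG, hprod]
    rw [Polynomial.C_mul_X_pow_eq_monomial, Polynomial.natDegree_monomial_eq _ hfg]
  have htdeg : (toPoly w f).natTrailingDegree + (toPoly w g).natTrailingDegree = N := by
    rw [← Polynomial.natTrailingDegree_mul hF hG, hprod,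
      Polynomial.C_mul_X_pow_eq_monomial, Polynomial.natTrailingDegree_monomial hfg]
  have h1 := Polynomial.natTrailingDegree_le_natDegree (toPoly w f)
  have h2 := Polynomial.natTrailingDegree_le_natDegree (toPoly w g)
  have hef : (toPoly w f).natTrailingDegree = (toPoly w f).natDegree := by omega
  have heg : (toPoly w g).natTrailingDegree = (toPoly w g).natDegree := by omega
  have key : ∀ p : MvPolynomial σ R, p ≠ 0 →
      (toPoly w p).natTrailingDegree = (toPoly w p).natDegree →
      IsWeightedHomogeneous w p ((toPoly w p).natDegree) := by
    intro p hp htd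
    set e := (toPoly w p).natDegree with he
    have hmono : toPoly w p = Polynomial.C ((toPoly w p).coeff e) * Polynomial.X ^ e := by
      ext k
      rw [Polynomial.coeff_C_mul, Polynomial.coeff_X_pow]
      rcases lt_trichotomy k e with hk | hk | hk
      · rw [if_neg hk.ne, mul_zero, Polynomial.coeff_eq_zero_of_lt_natTrailingDegree]
        omega
      · rw [if_pos hk, mul_one, hk]
      · rw [if_neg hk.ne', mul_zero, Polynomial.coeff_eq_zero_of_natDegree_lt hk]
    have hpa : p = weightedHomogeneousComponent w e p := by
      conv_lhs => rw [← toPoly_retract w p, hmono]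
      rw [Polynomial.eval_mul, Polynomial.eval_C, Polynomial.eval_pow, Polynomial.eval_X,
        one_pow, mul_one, toPoly_coeff]
    have hc := weightedHomogeneousComponent_isWeightedHomogeneous (w := w) e p
    rwa [← hpa] at hc
  exact ⟨(toPoly w f).natDegree, (toPoly w g).natDegree, hdeg,
    key f hf hef, key g hg heg⟩

end Aux

namespace Aux2

open Aux

variable {σ : Type*}

theorem isWeightedHomogeneous_pow {w : σ → ℕ} {p : MvPolynomial σ ℚ} {a : ℕ}
    (h : IsWeightedHomogeneous w p a) (k : ℕ) :
    IsWeightedHomogeneous w (p ^ k) (k * a) := by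
  induction k with
  | zero => simpa using isWeightedHomogeneous_one ℚ w
  | succ k ih =>
      have := ih.mul h
      rw [← pow_succ] at this
      rwa [Nat.succ_mul]

theorem isWeightedHomogeneous_of_isUnit (w : σ → ℕ) {u : MvPolynomial σ ℚ} (hu : IsUnit u) :
    IsWeightedHomogeneous w u 0 := by
  obtain ⟨v, hv⟩ := isUnit_iff_exists_inv.mp hu
  have hone : IsWeightedHomogeneous w (u * v) 0 := by
    rw [hv]; exact isWeightedHomogeneous_one ℚ w
  have hu0 : u ≠ 0 := by rintro rfl; simp at hv
  have hv0 : v ≠ 0 := by rintro rfl; simp at hv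
  obtain ⟨a, b, hab, ha, _⟩ := isWeightedHomogeneous_of_mul w hu0 hv0 hone
  have : a = 0 := by omega
  rwa [this] at ha

theorem isWeightedHomogeneous_smul_units {w : σ → ℕ} {p : MvPolynomial σ ℚ} {a : ℕ}
    (z : ℤˣ) (h : IsWeightedHomogeneous w p a) :
    IsWeightedHomogeneous w (z • p) a := by
  intro d hd
  refine h ?_
  intro h0
  apply hd
  rw [Units.smul_def, MvPolynomial.coeff_smul, h0, smul_zero]

theorem isUnit_of_isWeightedHomogeneous_zero {p : MvPolynomial σ ℚ}
    (hp : p ≠ 0) (h : IsWeightedHomogeneous (1 : σ → ℕ) p 0) : IsUnit p := by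
  classical
  have hC : p = C (coeff 0 p) := by
    ext d
    rcases eq_or_ne d 0 with rfl | hd
    · rw [coeff_C, if_pos rfl]
    · rw [coeff_C, if_neg (by exact fun hc => hd hc.symm)]
      by_contra hc
      have hw := h hc
      rw [Finsupp.weight_apply, Finsupp.sum] at hw
      apply hd
      ext v
      by_cases hv : v ∈ d.support
      · have := Finset.sum_eq_zero_iff.mp hw v hv
        simpa using this
      · simpa using Finsupp.notMem_support_iff.mp hv
  have hc0 : coeff 0 p ≠ 0 := fun h0 => hp (by rw [hC, h0, map_zero])
  rw [hC]
  exact IsUnit.map C (isUnit_iff_ne_zero.mpr hc0)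

/-- A substitution sending each variable to itself or to `0` preserves weighted homogeneity. -/
theorem aeval_sub_isWeightedHomogeneous (g : σ → MvPolynomial σ ℚ)
    (hg : ∀ v, g v = X v ∨ g v = 0) (w : σ → ℕ) {f : MvPolynomial σ ℚ} {N : ℕ}
    (hf : IsWeightedHomogeneous w f N) :
    IsWeightedHomogeneous w (aeval g f) N := by
  classical
  conv in aeval g f => rw [← support_sum_monomial_coeff f]
  rw [map_sum]
  refine IsWeightedHomogeneous.sum _ _ _ fun d hd => ?_
  rw [aeval_monomial]
  by_cases hall : ∀ v ∈ d.support, g v = X v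
  · have : (d.prod fun v e => g v ^ e) = d.prod fun v e => (X v : MvPolynomial σ ℚ) ^ e := by
      rw [Finsupp.prod, Finsupp.prod]
      exact Finset.prod_congr rfl fun v hv => by rw [hall v hv]
    rw [this, MvPolynomial.algebraMap_eq, ← monomial_eq]
    exact isWeightedHomogeneous_monomial w d _ (hf (mem_support_iff.mp hd))
  · push_neg at hall
    obtain ⟨v, hv, hgv⟩ := hall
    have hz : g v = 0 := (hg v).resolve_left hgv
    have : (d.prod fun v e => g v ^ e) = 0 := by
      rw [Finsupp.prod]
      refine Finset.prod_eq_zero hv ?_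
      rw [hz, zero_pow (Finsupp.mem_support_iff.mp hv)]
    rw [this, mul_zero]
    exact isWeightedHomogeneous_zero ℚ w N

end Aux2

namespace Aux3

open Aux Aux2

variable {m n : ℕ}

/-- The four corner positions. -/
def col (m n : ℕ) : Fin 4 → Fin (m + 1) × Fin (n + 1) :=
  ![((0 : Fin (m + 1)), (0 : Fin (n + 1))), (Fin.last m, 0), (0, Fin.last n),
    (Fin.last m, Fin.last n)]

theorem cornerDet_col (m n : ℕ) :
    cornerDet m n = (Matrix.of fun (i j : Fin 4) =>
      (X (i, col m n j) : MvPolynomial (MVar m n) ℚ)).det := rfl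

theorem cornerDet_eq (m n : ℕ) :
    cornerDet m n = ∑ σ : Equiv.Perm (Fin 4), Equiv.Perm.sign σ •
      ∏ k, (X (σ k, col m n k) : MvPolynomial (MVar m n) ℚ) := by
  rw [cornerDet, Matrix.det_apply]
  rfl

theorem col_injective (hm : 1 ≤ m) (hn : 1 ≤ n) : Function.Injective (col m n) := by
  have h1 : (0 : Fin (m + 1)) ≠ Fin.last m := by
    simp only [Ne, Fin.ext_iff, Fin.val_last, Fin.val_zero]; omega
  have h2 : (0 : Fin (n + 1)) ≠ Fin.last n := by
    simp only [Ne, Fin.ext_iff, Fin.val_last, Fin.val_zero]; omega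
  intro a b hab
  fin_cases a <;> fin_cases b <;>
    simp_all [col, Prod.ext_iff]

theorem cornerDet_whomog (w : MVar m n → ℕ) (N : ℕ)
    (h : ∀ σ : Equiv.Perm (Fin 4), ∑ k, w (σ k, col m n k) = N) :
    IsWeightedHomogeneous w (cornerDet m n) N := by
  rw [cornerDet_eq]
  refine IsWeightedHomogeneous.sum _ _ _ fun σ _ => ?_
  refine isWeightedHomogeneous_smul_units _ ?_
  have := IsWeightedHomogeneous.prod Finset.univ
    (fun k => (X (σ k, col m n k) : MvPolynomial (MVar m n) ℚ))
    (fun k => w (σ k, col m n k)) (fun k _ => isWeightedHomogeneous_X ℚ w _)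
  rwa [h σ] at this

theorem cornerDet_ne_zero (hm : 1 ≤ m) (hn : 1 ≤ n) : cornerDet m n ≠ 0 := by
  classical
  intro h0
  have := congrArg (aeval (fun v : MVar m n => if v.2 = col m n v.1 then (1 : ℚ) else 0)) h0
  rw [map_zero, cornerDet_col] at this
  rw [AlgHom.map_det] at this
  have hdet : (AlgHom.mapMatrix
      (aeval (fun v : MVar m n => if v.2 = col m n v.1 then (1 : ℚ) else 0)))
      (Matrix.of fun (i j : Fin 4) => (X (i, col m n j) : MvPolynomial (MVar m n) ℚ))
      = (1 : Matrix (Fin 4) (Fin 4) ℚ) := by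
    ext i j
    simp only [AlgHom.mapMatrix_apply, Matrix.map_apply, Matrix.of_apply, aeval_X]
    by_cases hij : i = j
    · subst hij; simp
    · rw [if_neg (fun hc => hij ((col_injective hm hn) hc).symm)]
      simp [Matrix.one_apply, hij]
  rw [hdet] at this
  simp at this

theorem prod_X_monomial {σ' : Type*} {ι : Type*} (s : Finset ι) (f : ι → σ') :
    (∏ i ∈ s, (X (f i) : MvPolynomial σ' ℚ))
      = monomial (∑ i ∈ s, Finsupp.single (f i) 1) 1 := by
  classical
  induction s using Finset.induction with
  | empty => simp
  | insert a s h ih =>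
      rw [Finset.prod_insert h, Finset.sum_insert h, ih, ← pow_one (X (f _)),
        X_pow_eq_monomial, monomial_mul, one_mul]

theorem weight_eq_zero_support {σ' : Type*} {w : σ' → ℕ} {d : σ' →₀ ℕ}
    (h : Finsupp.weight w d = 0) {v : σ'} (hv : w v ≠ 0) : d v = 0 := by
  classical
  rw [Finsupp.weight_apply, Finsupp.sum] at h
  by_cases hvs : v ∈ d.support
  · have := Finset.sum_eq_zero_iff.mp h v hvs
    simp only [smul_eq_mul, Nat.mul_eq_zero] at this
    tauto
  · exact Finsupp.notMem_support_iff.mp hvs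

/-- Row weights. -/
def rowwt (m n : ℕ) (r : Fin 4) : MVar m n → ℕ := fun v => if v.1 = r then 1 else 0

/-- Column weights. -/
def colwt (m n : ℕ) (j : Fin 4) : MVar m n → ℕ := fun v => if v.2 = col m n j then 1 else 0

open scoped Classical in
/-- Non-corner weight. -/
noncomputable def ncwt (m n : ℕ) : MVar m n → ℕ :=
  fun v => if ∃ j, v.2 = col m n j then 0 else 1

theorem cornerDet_isHomogeneous :
    IsWeightedHomogeneous (1 : MVar m n → ℕ) (cornerDet m n) 4 :=
  cornerDet_whomog _ 4 fun σ => by simp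

theorem cornerDet_omega :
    IsWeightedHomogeneous (fun v : MVar m n => (v.2.1 : ℕ)) (cornerDet m n) (2 * m) :=
  cornerDet_whomog _ _ fun σ => by
    simp [col, Fin.sum_univ_four]
    omega

theorem cornerDet_roww (r : Fin 4) :
    IsWeightedHomogeneous (rowwt m n r) (cornerDet m n) 1 :=
  cornerDet_whomog _ _ fun σ => by
    simp only [rowwt]
    rw [show (∑ k, if (σ k, col m n k).1 = r then 1 else 0)
        = ∑ k, (fun i => if i = r then 1 else 0) (σ k) from rfl,
      Equiv.sum_comp σ (fun i => if i = r then 1 else 0)]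
    simp

theorem cornerDet_colw (hm : 1 ≤ m) (hn : 1 ≤ n) (j : Fin 4) :
    IsWeightedHomogeneous (colwt m n j) (cornerDet m n) 1 :=
  cornerDet_whomog _ _ fun σ => by
    simp only [colwt]
    have hiff : ∀ k : Fin 4, ((σ k, col m n k).2 = col m n j) ↔ k = j := fun k =>
      ⟨fun h => col_injective hm hn h, fun h => by rw [h]⟩
    rw [Finset.sum_congr rfl (fun k _ => if_congr (hiff k) rfl rfl)]
    simp

theorem cornerDet_ncw :
    IsWeightedHomogeneous (ncwt m n) (cornerDet m n) 0 :=
  cornerDet_whomog _ _ fun σ => by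
    refine Finset.sum_eq_zero fun k _ => ?_
    simp only [ncwt]
    rw [if_pos ⟨k, rfl⟩]

/-- The exponent vector of the monomial of `cornerDet` associated with a permutation. -/
noncomputable def dperm (m n : ℕ) (σ : Equiv.Perm (Fin 4)) : MVar m n →₀ ℕ :=
  ∑ k, Finsupp.single ((σ k, col m n k) : MVar m n) 1

theorem dperm_apply_ge (σ : Equiv.Perm (Fin 4)) (k : Fin 4) :
    1 ≤ dperm m n σ (σ k, col m n k) := by
  classical
  rw [dperm, Finsupp.finset_sum_apply]
  have := Finset.single_le_sum
    (f := fun k' : Fin 4 => Finsupp.single ((σ k', col m n k') : MVar m n) 1 (σ k, col m n k))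
    (fun i _ => Nat.zero_le _) (Finset.mem_univ k)
  simpa using this

theorem dperm_inj (hm : 1 ≤ m) (hn : 1 ≤ n) {σ τ : Equiv.Perm (Fin 4)}
    (h : dperm m n τ = dperm m n σ) : τ = σ := by
  classical
  apply Equiv.ext
  intro k
  have h1 : 1 ≤ dperm m n τ (σ k, col m n k) := by rw [h]; exact dperm_apply_ge σ k
  rw [dperm, Finsupp.finset_sum_apply] at h1
  have hex : ∃ k' ∈ Finset.univ,
      Finsupp.single ((τ k', col m n k') : MVar m n) 1 (σ k, col m n k) ≠ 0 := by
    by_contra hno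
    push_neg at hno
    rw [Finset.sum_eq_zero hno] at h1
    omega
  obtain ⟨k', _, hk'⟩ := hex
  have heq : ((τ k', col m n k') : MVar m n) = (σ k, col m n k) := by
    by_contra hne
    exact hk' (Finsupp.single_eq_of_ne' hne)
  have h2 : col m n k' = col m n k := congrArg Prod.snd heq
  have hk : k' = k := col_injective hm hn h2
  have := congrArg Prod.fst heq
  rwa [hk] at this

theorem dperm_mem_support (hm : 1 ≤ m) (hn : 1 ≤ n) (σ : Equiv.Perm (Fin 4)) :
    dperm m n σ ∈ (cornerDet m n).support := by
  classical
  rw [mem_support_iff, cornerDet_eq, coeff_sum]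
  have hterm : ∀ τ : Equiv.Perm (Fin 4),
      coeff (dperm m n σ) (Equiv.Perm.sign τ • ∏ k, (X (τ k, col m n k) :
        MvPolynomial (MVar m n) ℚ))
      = if τ = σ then ((Equiv.Perm.sign τ : ℤ) : ℚ) else 0 := by
    intro τ
    rw [Units.smul_def, MvPolynomial.coeff_smul, prod_X_monomial, coeff_monomial]
    rw [show (∑ i : Fin 4, Finsupp.single ((τ i, col m n i) : MVar m n) (1 : ℕ))
      = dperm m n τ from rfl]
    by_cases hts : τ = σ
    · rw [if_pos (by rw [hts]), if_pos hts]
      simp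
    · rw [if_neg (fun hc => hts (dperm_inj hm hn hc)), if_neg hts, smul_zero]
  rw [Finset.sum_congr rfl fun τ _ => hterm τ, Finset.sum_ite_eq' Finset.univ σ
    (fun τ => ((Equiv.Perm.sign τ : ℤ) : ℚ)), if_pos (Finset.mem_univ σ)]
  rcases Int.units_eq_one_or (Equiv.Perm.sign σ) with h | h <;> simp [h]

theorem sum_row_weights (d : MVar m n →₀ ℕ) :
    ∑ r : Fin 4, Finsupp.weight (rowwt m n r) d
      = Finsupp.weight (1 : MVar m n → ℕ) d := by
  classical
  simp only [Finsupp.weight_apply, Finsupp.sum]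
  rw [Finset.sum_comm]
  refine Finset.sum_congr rfl fun v _ => ?_
  simp [rowwt, smul_eq_mul, mul_ite, Finset.sum_ite_eq']

theorem sum_col_weights (hm : 1 ≤ m) (hn : 1 ≤ n) (d : MVar m n →₀ ℕ)
    (hd : ∀ v ∈ d.support, ∃ j, v.2 = col m n j) :
    ∑ j : Fin 4, Finsupp.weight (colwt m n j) d
      = Finsupp.weight (1 : MVar m n → ℕ) d := by
  classical
  simp only [Finsupp.weight_apply, Finsupp.sum]
  rw [Finset.sum_comm]
  refine Finset.sum_congr rfl fun v hv => ?_
  obtain ⟨j₀, hj₀⟩ := hd v hv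
  have hiff : ∀ j : Fin 4, (v.2 = col m n j) ↔ j = j₀ := fun j =>
    ⟨fun h => col_injective hm hn (h ▸ hj₀), fun h => by rw [h, ← hj₀]⟩
  simp only [colwt]
  rw [Finset.sum_congr rfl (fun j _ => by rw [if_congr (hiff j) rfl rfl])]
  simp [smul_eq_mul, mul_ite, Finset.sum_ite_eq']

theorem cornerDet_irreducible (hm : 1 ≤ m) (hn : 1 ≤ n) : Irreducible (cornerDet m n) := by
  classical
  have hΔ0 := cornerDet_ne_zero hm hn
  constructor
  · intro hu
    have h0 := isWeightedHomogeneous_of_isUnit (1 : MVar m n → ℕ) hu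
    have h4 := cornerDet_isHomogeneous (m := m) (n := n)
    have := IsWeightedHomogeneous.inj_right hΔ0 h0 h4
    omega
  · intro F G hFG
    by_contra hcon
    push_neg at hcon
    obtain ⟨hFu, hGu⟩ := hcon
    have hF0 : F ≠ 0 := by rintro rfl; rw [zero_mul] at hFG; exact hΔ0 hFG
    have hG0 : G ≠ 0 := by rintro rfl; rw [mul_zero] at hFG; exact hΔ0 hFG
    obtain ⟨dF, dG, hdsum, hFh, hGh⟩ :=
      isWeightedHomogeneous_of_mul 1 hF0 hG0 (hFG ▸ cornerDet_isHomogeneous)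
    have hrow : ∀ r : Fin 4, ∃ a b, a + b = 1 ∧
        IsWeightedHomogeneous (rowwt m n r) F a ∧
        IsWeightedHomogeneous (rowwt m n r) G b := fun r =>
      isWeightedHomogeneous_of_mul _ hF0 hG0 (hFG ▸ cornerDet_roww r)
    choose rF rG hrsum hrF hrG using hrow
    have hcol : ∀ j : Fin 4, ∃ a b, a + b = 1 ∧
        IsWeightedHomogeneous (colwt m n j) F a ∧
        IsWeightedHomogeneous (colwt m n j) G b := fun j =>
      isWeightedHomogeneous_of_mul _ hF0 hG0 (hFG ▸ cornerDet_colw hm hn j)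
    choose cF cG hcsum hcF hcG using hcol
    obtain ⟨aN, bN, habN, hFnc, hGnc⟩ :=
      isWeightedHomogeneous_of_mul _ hF0 hG0 (hFG ▸ cornerDet_ncw)
    have haN : aN = 0 := by omega
    have hbN : bN = 0 := by omega
    rw [haN] at hFnc
    rw [hbN] at hGnc
    -- positivity of the degrees
    have hdF : 1 ≤ dF := by
      rcases Nat.eq_zero_or_pos dF with h | h
      · exact absurd (isUnit_of_isWeightedHomogeneous_zero hF0 (h ▸ hFh)) hFu
      · exact h
    have hdG : 1 ≤ dG := by
      rcases Nat.eq_zero_or_pos dG with h | h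
      · exact absurd (isUnit_of_isWeightedHomogeneous_zero hG0 (h ▸ hGh)) hGu
      · exact h
    -- row sum for F
    obtain ⟨dF0, hdF0⟩ := exists_coeff_ne_zero hF0
    have hrowsumF : ∑ r, rF r = dF := by
      rw [← hFh hdF0, ← sum_row_weights]
      exact Finset.sum_congr rfl fun r _ => (hrF r hdF0).symm
    -- column sum for G
    obtain ⟨dG0, hdG0⟩ := exists_coeff_ne_zero hG0
    have hgood : ∀ v ∈ dG0.support, ∃ j, v.2 = col m n j := by
      intro v hv
      by_contra hno
      have hwnc : ncwt m n v ≠ 0 := by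
        simp only [ncwt]
        rw [if_neg hno]
        omega
      exact (Finsupp.mem_support_iff.mp hv) (weight_eq_zero_support (hGnc hdG0) hwnc)
    have hcolsumG : ∑ j, cG j = dG := by
      rw [← hGh hdG0, ← sum_col_weights hm hn dG0 hgood]
      exact Finset.sum_congr rfl fun j _ => (hcG j hdG0).symm
    -- pick a row of F and a column of G
    have hrex : ∃ r, rF r ≠ 0 := by
      by_contra hno
      push_neg at hno
      rw [Finset.sum_eq_zero (fun r _ => hno r)] at hrowsumF
      omega
    obtain ⟨r, hr⟩ := hrex
    have hrG0 : rG r = 0 := by have := hrsum r; omega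
    have hcex : ∃ j', cG j' ≠ 0 := by
      by_contra hno
      push_neg at hno
      rw [Finset.sum_eq_zero (fun j _ => hno j)] at hcolsumG
      omega
    obtain ⟨j', hj'⟩ := hcex
    have hcF0 : cF j' = 0 := by have := hcsum j'; omega
    -- the offending monomial
    set σ := Equiv.swap r j' with hσ
    have hmem := dperm_mem_support hm hn σ
    have hmem' : dperm m n σ ∈ (F * G).support := by rwa [← hFG]
    obtain ⟨a, ha, b, hb, hab⟩ := Finset.mem_add.mp (support_mul F G hmem')
    have hwb : Finsupp.weight (rowwt m n r) b = 0 := by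
      rw [hrG r (mem_support_iff.mp hb), hrG0]
    have hb0 : b (r, col m n j') = 0 :=
      weight_eq_zero_support hwb (by simp [rowwt])
    have hwa : Finsupp.weight (colwt m n j') a = 0 := by
      rw [hcF j' (mem_support_iff.mp ha), hcF0]
    have ha0 : a (r, col m n j') = 0 :=
      weight_eq_zero_support hwa (by simp [colwt])
    have h1 : 1 ≤ dperm m n σ (r, col m n j') := by
      have := dperm_apply_ge (m := m) (n := n) σ j'
      rwa [hσ, Equiv.swap_apply_right] at this
    rw [← hab] at h1
    rw [Finsupp.add_apply, ha0, hb0] at h1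
    omega

end Aux3

/-- if `D ≠ 0` is homogeneous of degree `4mn`, ω-isobaric of degree
`2m²n` (weight `ω(c_{ia}) = a₁`), its corner specialization equals `± Δ^{mn}`, and
`D = P·Q`, then there is `k` with `0 ≤ k ≤ mn` such that `P` is homogeneous of
degree `4k` and isobaric of degree `2mk`, and `Q` is homogeneous of degree
`4(mn−k)` and isobaric of degree `2m(mn−k)`. -/
theorem factor_degrees_of_corner_spec (m n : ℕ) (hm : 1 ≤ m) (hn : 1 ≤ n)
    (D P Q : MvPolynomial (MVar m n) ℚ)
    (hD0 : D ≠ 0)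
    (hhom : D.IsHomogeneous (4 * m * n))
    (hiso : IsWeightedHomogeneous (fun v : MVar m n => (v.2.1 : ℕ)) D (2 * m ^ 2 * n))
    (hspec : cornerSpec m n D = cornerDet m n ^ (m * n) ∨
             cornerSpec m n D = -(cornerDet m n ^ (m * n)))
    (hfac : D = P * Q) :
    ∃ k : ℕ, k ≤ m * n ∧
      P.IsHomogeneous (4 * k) ∧
      IsWeightedHomogeneous (fun v : MVar m n => (v.2.1 : ℕ)) P (2 * m * k) ∧
      Q.IsHomogeneous (4 * (m * n - k)) ∧
      IsWeightedHomogeneous (fun v : MVar m n => (v.2.1 : ℕ)) Q (2 * m * (m * n - k)) := by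
  classical
  set ω : MVar m n → ℕ := fun v => (v.2.1 : ℕ) with hω
  have hP0 : P ≠ 0 := fun h => hD0 (by rw [hfac, h, zero_mul])
  have hQ0 : Q ≠ 0 := fun h => hD0 (by rw [hfac, h, mul_zero])
  have hΔ0 : cornerDet m n ≠ 0 := Aux3.cornerDet_ne_zero hm hn
  have hΔpow0 : cornerDet m n ^ (m * n) ≠ 0 := pow_ne_zero _ hΔ0
  -- bihomogeneity of the factors
  rw [hfac] at hhom hiso
  obtain ⟨dP, dQ, hdsum, hPh, hQh⟩ :=
    Aux.isWeightedHomogeneous_of_mul (R := ℚ) 1 hP0 hQ0 hhom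
  obtain ⟨wP, wQ, hwsum, hPω, hQω⟩ :=
    Aux.isWeightedHomogeneous_of_mul (R := ℚ) ω hP0 hQ0 hiso
  -- the corner specializations
  have hgX : ∀ v : MVar m n,
      (if (v.2.1 = 0 ∨ v.2.1 = Fin.last m) ∧ (v.2.2 = 0 ∨ v.2.2 = Fin.last n)
        then (X v : MvPolynomial (MVar m n) ℚ) else 0) = X v ∨
      (if (v.2.1 = 0 ∨ v.2.1 = Fin.last m) ∧ (v.2.2 = 0 ∨ v.2.2 = Fin.last n)
        then (X v : MvPolynomial (MVar m n) ℚ) else 0) = 0 := by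
    intro v; split <;> simp
  have hspecP : ∀ (w : MVar m n → ℕ) (N : ℕ) (f : MvPolynomial (MVar m n) ℚ),
      IsWeightedHomogeneous w f N → IsWeightedHomogeneous w (cornerSpec m n f) N := by
    intro w N f hf
    exact Aux2.aeval_sub_isWeightedHomogeneous _ hgX w hf
  have hmul : cornerSpec m n P * cornerSpec m n Q = cornerSpec m n D := by
    rw [hfac, map_mul]
  -- divisibility
  have hdvd : cornerSpec m n P ∣ cornerDet m n ^ (m * n) := by
    rcases hspec with h | h
    · exact ⟨cornerSpec m n Q, by rw [← h, ← hmul]⟩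
    · exact ⟨-(cornerSpec m n Q), by rw [mul_neg, hmul, h, neg_neg]⟩
  have hP'0 : cornerSpec m n P ≠ 0 := by
    intro h0
    rcases hspec with h | h
    · rw [← hmul, h0, zero_mul] at h; exact hΔpow0 h.symm
    · rw [← hmul, h0, zero_mul] at h
      exact hΔpow0 (by rw [← neg_neg (cornerDet m n ^ (m * n)), ← h, neg_zero])
  -- prime power factorization
  have hprime : Prime (cornerDet m n) :=
    (UniqueFactorizationMonoid.irreducible_iff_prime).mp (Aux3.cornerDet_irreducible hm hn)
  obtain ⟨k, hk, hassoc⟩ := (dvd_prime_pow hprime _).mp hdvd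
  obtain ⟨u, hu⟩ := hassoc
  -- degrees of cornerSpec P
  have hP'h : IsWeightedHomogeneous (1 : MVar m n → ℕ) (cornerSpec m n P) dP :=
    hspecP _ _ _ hPh
  have hP'ω : IsWeightedHomogeneous ω (cornerSpec m n P) wP := hspecP _ _ _ hPω
  have huh : IsWeightedHomogeneous (1 : MVar m n → ℕ) (u : MvPolynomial (MVar m n) ℚ) 0 :=
    Aux2.isWeightedHomogeneous_of_isUnit _ u.isUnit
  have huω : IsWeightedHomogeneous ω (u : MvPolynomial (MVar m n) ℚ) 0 :=
    Aux2.isWeightedHomogeneous_of_isUnit _ u.isUnit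
  have hΔk0 : cornerDet m n ^ k ≠ 0 := pow_ne_zero _ hΔ0
  have hΔkh : IsWeightedHomogeneous (1 : MVar m n → ℕ) (cornerDet m n ^ k) (k * 4) :=
    Aux2.isWeightedHomogeneous_pow Aux3.cornerDet_isHomogeneous k
  have hΔkω : IsWeightedHomogeneous ω (cornerDet m n ^ k) (k * (2 * m)) :=
    Aux2.isWeightedHomogeneous_pow Aux3.cornerDet_omega k
  have hP'h2 : IsWeightedHomogeneous (1 : MVar m n → ℕ) (cornerDet m n ^ k) (dP + 0) := by
    rw [← hu]; exact hP'h.mul huh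
  have hP'ω2 : IsWeightedHomogeneous ω (cornerDet m n ^ k) (wP + 0) := by
    rw [← hu]; exact hP'ω.mul huω
  have hdP : dP = 4 * k := by
    have := IsWeightedHomogeneous.inj_right hΔk0 hP'h2 hΔkh
    omega
  have hwP : wP = 2 * m * k := by
    have := IsWeightedHomogeneous.inj_right hΔk0 hP'ω2 hΔkω
    have h2 : k * (2 * m) = 2 * m * k := by ring
    omega
  -- degree bookkeeping
  have hkmn : k ≤ m * n := hk
  have hdQ : dQ = 4 * (m * n - k) := by
    have h1 : 4 * m * n = 4 * (m * n) := by ring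
    have h2 : 4 * k + 4 * ((m * n) - k) = 4 * (m * n) := by
      rw [← Nat.mul_add, Nat.add_sub_cancel' hkmn]
    omega
  have hwQ : wQ = 2 * m * (m * n - k) := by
    have h1 : 2 * m ^ 2 * n = 2 * m * (m * n) := by ring
    have h2 : 2 * m * k + 2 * m * ((m * n) - k) = 2 * m * (m * n) := by
      rw [← Nat.mul_add, Nat.add_sub_cancel' hkmn]
    omega
  exact ⟨k, hkmn, hdP ▸ hPh, hwP ▸ hPω, hdQ ▸ hQh, hwQ ▸ hQω⟩
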